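/- Let φ belong to the class Φ, let (D,d) be a compact metric space, and let I : D → ℝ be a Lipschitz function on (D, d_φ), i.e., there is K > 0 with |I(a) − I(b)| ≤ K φ(d(a,b)) for all a,b ∈ D. Then there exists a₀ ∈ D such that the standard index I_{a₀} := (b ↦ φ(d(a₀,b))) is a best uniform approximation to I among standard indices: sup_{b∈D} |I(b) − φ(d(a₀,b))| = inf_{a∈D} sup_{b∈D} |I(b) − φ(d(a,b))|. -/

import Mathlib

/-- **best approximation by standard indices.** For `φ ∈ Φ`, `(D,d)` a
compact metric space and `I : D → ℝ` Lipschitz with respect to `d_φ`, there exists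
`a₀ ∈ D` whose standard index `b ↦ φ(d(a₀,b))` is a best uniform approximation to
`I` among all standard indices. -/
theorem best_approximation_standard_index
    {D : Type*} [MetricSpace D] [CompactSpace D] [Nonempty D] (φ : ℝ → ℝ)
    (hnn : ∀ x : ℝ, 0 ≤ x → 0 ≤ φ x)
    (hsub : ∀ x y : ℝ, 0 ≤ x → 0 ≤ y → φ (x + y) ≤ φ x + φ y)
    (hmono : ∀ x y : ℝ, 0 ≤ x → x < y → φ x < φ y)
    (h0 : φ 0 = 0)
    (hcont : ContinuousOn φ (Set.Ici (0 : ℝ)))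
    (I : D → ℝ) (K : ℝ) (hK : 0 < K)
    (hI : ∀ a b : D, |I a - I b| ≤ K * φ (dist a b)) :
    ∃ a₀ : D, (⨆ b : D, |I b - φ (dist a₀ b)|)
      = ⨅ a : D, ⨆ b : D, |I b - φ (dist a b)| := by
  have hmono' : ∀ x y : ℝ, 0 ≤ x → x ≤ y → φ x ≤ φ y := by
    intro x y hx hxy
    rcases hxy.lt_or_eq with h | h
    · exact (hmono x y hx h).le
    · rw [h]
  have hsub' : ∀ x y : ℝ, 0 ≤ y → y ≤ x → φ x - φ y ≤ φ (x - y) := by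
    intro x y hy hxy
    have h := hsub y (x - y) hy (by linarith)
    have hx : y + (x - y) = x := by ring
    rw [hx] at h
    linarith
  have hdiff : ∀ x y : ℝ, 0 ≤ x → 0 ≤ y → |φ x - φ y| ≤ φ |x - y| := by
    intro x y hx hy
    rcases le_total x y with h | h
    · rw [abs_sub_comm, abs_of_nonneg (sub_nonneg.2 (hmono' x y hx h)), abs_sub_comm,
        abs_of_nonneg (sub_nonneg.2 h)]
      exact hsub' y x hx h
    · rw [abs_of_nonneg (by linarith [hmono' y x hy h]), abs_of_nonneg (by linarith)]
      exact hsub' x y hy h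
  have hφ0 : ∀ ε : ℝ, 0 < ε → ∃ δ > 0, ∀ x : ℝ, 0 ≤ x → x < δ → φ x < ε := by
    intro ε hε
    have hc := hcont 0 Set.self_mem_Ici
    rw [Metric.continuousWithinAt_iff] at hc
    obtain ⟨δ, hδ, h⟩ := hc ε hε
    refine ⟨δ, hδ, fun x hx hxδ => ?_⟩
    have := h hx (by simpa [Real.dist_eq, abs_of_nonneg hx] using hxδ)
    rw [Real.dist_eq, h0, sub_zero] at this
    exact lt_of_le_of_lt (le_abs_self _) this
  have hFbound : ∀ a a' b : D,
      |I b - φ (dist a b)| ≤ |I b - φ (dist a' b)| + φ (dist a a') := by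
    intro a a' b
    have h1 : |φ (dist a' b) - φ (dist a b)| ≤ φ (dist a a') := by
      calc |φ (dist a' b) - φ (dist a b)| ≤ φ |dist a' b - dist a b| :=
            hdiff _ _ dist_nonneg dist_nonneg
        _ ≤ φ (dist a' a) := hmono' _ _ (abs_nonneg _) (abs_dist_sub_le a' a b)
        _ = φ (dist a a') := by rw [dist_comm]
    have h2 : I b - φ (dist a b)
        = (I b - φ (dist a' b)) + (φ (dist a' b) - φ (dist a b)) := by ring
    calc |I b - φ (dist a b)|
        ≤ |I b - φ (dist a' b)| + |φ (dist a' b) - φ (dist a b)| := by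
          rw [h2]; exact abs_add_le _ _
      _ ≤ |I b - φ (dist a' b)| + φ (dist a a') := by linarith
  have hIcont : Continuous I := by
    rw [Metric.continuous_iff]
    intro b ε hε
    obtain ⟨δ, hδ, h⟩ := hφ0 (ε / K) (by positivity)
    refine ⟨δ, hδ, fun a hab => ?_⟩
    have h2 := h (dist a b) dist_nonneg hab
    rw [Real.dist_eq]
    calc |I a - I b| ≤ K * φ (dist a b) := hI a b
      _ < K * (ε / K) := by exact mul_lt_mul_of_pos_left h2 hK
      _ = ε := by field_simp
  have hφdcont : ∀ a : D, Continuous fun b => φ (dist a b) := fun a =>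
    hcont.comp_continuous (continuous_const.dist continuous_id) fun b => dist_nonneg
  have hFcont : ∀ a : D, Continuous fun b => |I b - φ (dist a b)| := fun a =>
    (hIcont.sub (hφdcont a)).abs
  have hFbdd : ∀ a : D, BddAbove (Set.range fun b => |I b - φ (dist a b)|) := fun a =>
    (isCompact_range (hFcont a)).bddAbove
  set g : D → ℝ := fun a => ⨆ b : D, |I b - φ (dist a b)| with hg
  have hgle : ∀ a a' : D, g a ≤ g a' + φ (dist a a') := by
    intro a a'
    refine ciSup_le fun b => ?_
    calc |I b - φ (dist a b)| ≤ |I b - φ (dist a' b)| + φ (dist a a') := hFbound a a' b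
      _ ≤ g a' + φ (dist a a') :=
        add_le_add_left (le_ciSup (hFbdd a') b) _
  have hgcont : Continuous g := by
    rw [Metric.continuous_iff]
    intro a ε hε
    obtain ⟨δ, hδ, h⟩ := hφ0 ε hε
    refine ⟨δ, hδ, fun a' ha' => ?_⟩
    have h3 : φ (dist a' a) < ε := h _ dist_nonneg ha'
    have h4 : φ (dist a a') < ε := by rwa [dist_comm]
    have h1 := hgle a a'
    have h2 := hgle a' a
    rw [Real.dist_eq, abs_sub_lt_iff]
    constructor <;> linarith
  obtain ⟨a₀, -, ha₀⟩ := isCompact_univ.exists_isMinOn Set.univ_nonempty hgcont.continuousOn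
  refine ⟨a₀, le_antisymm ?_ ?_⟩
  · exact le_ciInf fun a => ha₀ (Set.mem_univ a)
  · exact ciInf_le ⟨g a₀, fun x ⟨a, ha⟩ => ha ▸ ha₀ (Set.mem_univ a)⟩ a₀
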